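/- In the non-chiral symplectic fermions setting, the holomorphic and antiholomorphic Sugawara Virasoro modes commute: [L_n, L̄_m] = 0 on the non-chiral logarithmic Fock space F, for all n, m ∈ ℤ. -/
import Mathlib


noncomputable section

/-- Generators of the non-chiral symplectic fermions algebra: holomorphic
modes eta k, chi k and antiholomorphic modes etaB k, chiB k. -/
inductive NSFGen
  | eta (k : ℤ)
  | chi (k : ℤ)
  | etaB (k : ℤ)
  | chiB (k : ℤ)

/-- The free associative unital C-algebra on the generators. -/
abbrev NSFFree := FreeAlgebra ℂ NSFGen

def nge (k : ℤ) : NSFFree := FreeAlgebra.ι ℂ (NSFGen.eta k)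
def ngc (k : ℤ) : NSFFree := FreeAlgebra.ι ℂ (NSFGen.chi k)
def ngeB (k : ℤ) : NSFFree := FreeAlgebra.ι ℂ (NSFGen.etaB k)
def ngcB (k : ℤ) : NSFFree := FreeAlgebra.ι ℂ (NSFGen.chiB k)

/-- The defining relations of the non-chiral symplectic fermions algebra:
the holomorphic and antiholomorphic copies each satisfy the symplectic
fermions anticommutation relations, and the two copies anticommute. -/
inductive NSFRel : NSFFree → NSFFree → Prop
  | etaEta (k l : ℤ) : NSFRel (nge k * nge l + nge l * nge k) 0
  | chiChi (k l : ℤ) : NSFRel (ngc k * ngc l + ngc l * ngc k) 0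
  | etaChi (k l : ℤ) :
      NSFRel (nge k * ngc l + ngc l * nge k)
        (algebraMap ℂ NSFFree (if k + l = 0 then (k : ℂ) else 0))
  | etaEtaB (k l : ℤ) : NSFRel (ngeB k * ngeB l + ngeB l * ngeB k) 0
  | chiChiB (k l : ℤ) : NSFRel (ngcB k * ngcB l + ngcB l * ngcB k) 0
  | etaChiB (k l : ℤ) :
      NSFRel (ngeB k * ngcB l + ngcB l * ngeB k)
        (algebraMap ℂ NSFFree (if k + l = 0 then (k : ℂ) else 0))
  | mixedCC (k l : ℤ) : NSFRel (ngc k * ngcB l + ngcB l * ngc k) 0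
  | mixedCE (k l : ℤ) : NSFRel (ngc k * ngeB l + ngeB l * ngc k) 0
  | mixedEC (k l : ℤ) : NSFRel (nge k * ngcB l + ngcB l * nge k) 0
  | mixedEE (k l : ℤ) : NSFRel (nge k * ngeB l + ngeB l * nge k) 0

/-- The non-chiral symplectic fermions algebra SF. -/
abbrev NSF := RingQuot NSFRel

def η (k : ℤ) : NSF := RingQuot.mkAlgHom ℂ NSFRel (nge k)
def χ (k : ℤ) : NSF := RingQuot.mkAlgHom ℂ NSFRel (ngc k)
def ηB (k : ℤ) : NSF := RingQuot.mkAlgHom ℂ NSFRel (ngeB k)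
def χB (k : ℤ) : NSF := RingQuot.mkAlgHom ℂ NSFRel (ngcB k)

/-- The left ideal generated by the positive modes together with
η 0 − ηB 0 and χ 0 − χB 0. -/
def nposIdeal : Submodule NSF NSF :=
  Submodule.span NSF
    ({x | ∃ k > 0, x = η k} ∪ {x | ∃ k > 0, x = χ k} ∪
     {x | ∃ k > 0, x = ηB k} ∪ {x | ∃ k > 0, x = χB k} ∪
     {η 0 - ηB 0, χ 0 - χB 0})

/-- The non-chiral logarithmic Fock space F. -/
abbrev NFock := NSF ⧸ nposIdeal

/-- The state ω = [1]. -/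
def vac : NFock := Submodule.Quotient.mk 1
/-- The identity field. -/
def oneV : NFock := (χ 0 * η 0) • vac
/-- The ground fermion ξ. -/
def xiV : NFock := -(χ 0 • vac)
/-- The ground fermion θ. -/
def thetaV : NFock := -(η 0 • vac)

/-- Holomorphic Sugawara summand. -/
def sfterm (n k : ℤ) : NSF :=
  if n ≤ 2 * k then χ (n - k) * η k else -(η k * χ (n - k))
/-- Antiholomorphic Sugawara summand. -/
def sftermB (n k : ℤ) : NSF :=
  if n ≤ 2 * k then χB (n - k) * ηB k else -(ηB k * χB (n - k))

/-- The holomorphic Sugawara Virasoro mode L n. -/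
def L (n : ℤ) (v : NFock) : NFock := ∑ᶠ k : ℤ, sfterm n k • v
/-- The antiholomorphic Sugawara Virasoro mode Lbar n. -/
def Lb (n : ℤ) (v : NFock) : NFock := ∑ᶠ k : ℤ, sftermB n k • v

-- test basic lemmas
abbrev NSFmk : NSFFree →ₐ[ℂ] NSF := RingQuot.mkAlgHom ℂ NSFRel

lemma acom_ee (k l : ℤ) : η k * η l + η l * η k = 0 := by
  have h := RingQuot.mkAlgHom_rel ℂ (NSFRel.etaEta k l)
  simpa [η, map_add, map_mul] using h

lemma acom_ec (k l : ℤ) : η k * χ l + χ l * η k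
    = algebraMap ℂ NSF (if k + l = 0 then (k : ℂ) else 0) := by
  have h := RingQuot.mkAlgHom_rel ℂ (NSFRel.etaChi k l)
  simpa [η, χ, map_add, map_mul, AlgHom.commutes] using h

def parF : NSFFree →ₐ[ℂ] NSFFree := FreeAlgebra.lift ℂ (fun g => -FreeAlgebra.ι ℂ g)

lemma parF_quad (a b : NSFGen) :
    parF (FreeAlgebra.ι ℂ a * FreeAlgebra.ι ℂ b + FreeAlgebra.ι ℂ b * FreeAlgebra.ι ℂ a)
      = FreeAlgebra.ι ℂ a * FreeAlgebra.ι ℂ b + FreeAlgebra.ι ℂ b * FreeAlgebra.ι ℂ a := by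
  simp [parF, FreeAlgebra.lift_ι_apply]

lemma parF_ok : ∀ ⦃x y : NSFFree⦄, NSFRel x y →
    (NSFmk.comp parF) x = (NSFmk.comp parF) y := by
  intro x y h
  cases h with
  | etaEta k l =>
      simpa [nge, parF_quad] using RingQuot.mkAlgHom_rel ℂ (NSFRel.etaEta k l)
  | chiChi k l =>
      simpa [ngc, parF_quad] using RingQuot.mkAlgHom_rel ℂ (NSFRel.chiChi k l)
  | etaChi k l =>
      simpa [nge, ngc, parF_quad] using RingQuot.mkAlgHom_rel ℂ (NSFRel.etaChi k l)
  | etaEtaB k l =>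
      simpa [ngeB, parF_quad] using RingQuot.mkAlgHom_rel ℂ (NSFRel.etaEtaB k l)
  | chiChiB k l =>
      simpa [ngcB, parF_quad] using RingQuot.mkAlgHom_rel ℂ (NSFRel.chiChiB k l)
  | etaChiB k l =>
      simpa [ngeB, ngcB, parF_quad] using RingQuot.mkAlgHom_rel ℂ (NSFRel.etaChiB k l)
  | mixedCC k l =>
      simpa [ngc, ngcB, parF_quad] using RingQuot.mkAlgHom_rel ℂ (NSFRel.mixedCC k l)
  | mixedCE k l =>
      simpa [ngc, ngeB, parF_quad] using RingQuot.mkAlgHom_rel ℂ (NSFRel.mixedCE k l)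
  | mixedEC k l =>
      simpa [nge, ngcB, parF_quad] using RingQuot.mkAlgHom_rel ℂ (NSFRel.mixedEC k l)
  | mixedEE k l =>
      simpa [nge, ngeB, parF_quad] using RingQuot.mkAlgHom_rel ℂ (NSFRel.mixedEE k l)

def σa : NSF →ₐ[ℂ] NSF := RingQuot.liftAlgHom ℂ ⟨NSFmk.comp parF, parF_ok⟩

lemma σa_mk (x : NSFFree) : σa (NSFmk x) = NSFmk (parF x) :=
  RingQuot.liftAlgHom_mkAlgHom_apply ℂ (NSFmk.comp parF) parF_ok x

lemma σa_η (k : ℤ) : σa (η k) = -η k := by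
  show σa (NSFmk (nge k)) = _
  rw [σa_mk]; simp [parF, nge, FreeAlgebra.lift_ι_apply, η]
lemma σa_χ (k : ℤ) : σa (χ k) = -χ k := by
  show σa (NSFmk (ngc k)) = _
  rw [σa_mk]; simp [parF, ngc, FreeAlgebra.lift_ι_apply, χ]
lemma σa_ηB (k : ℤ) : σa (ηB k) = -ηB k := by
  show σa (NSFmk (ngeB k)) = _
  rw [σa_mk]; simp [parF, ngeB, FreeAlgebra.lift_ι_apply, ηB]
lemma σa_χB (k : ℤ) : σa (χB k) = -χB k := by
  show σa (NSFmk (ngcB k)) = _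
  rw [σa_mk]; simp [parF, ngcB, FreeAlgebra.lift_ι_apply, χB]


lemma acom_base {x y : NSFFree}
    (h : NSFRel (x * y + y * x) 0) : NSFmk x * NSFmk y = -(NSFmk y * NSFmk x) := by
  have h' := RingQuot.mkAlgHom_rel ℂ h
  rw [map_add, map_mul, map_mul, map_zero] at h'
  exact eq_neg_of_add_eq_zero_left h'

lemma acom_delta {x y : NSFFree} {k l : ℤ} (hkl : k + l ≠ 0)
    (h : NSFRel (x * y + y * x) (algebraMap ℂ NSFFree (if k + l = 0 then (k : ℂ) else 0))) :
    NSFmk x * NSFmk y = -(NSFmk y * NSFmk x) := by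
  have h' := RingQuot.mkAlgHom_rel ℂ h
  rw [map_add, map_mul, map_mul, if_neg hkl, map_zero, map_zero] at h'
  exact eq_neg_of_add_eq_zero_left h'

lemma swap_of (a b : NSF) (h : a * b = -(b * a)) : b * a = -(a * b) := by
  rw [h, neg_neg]

-- unconditional mixed anticommutators
lemma Pcc (k l : ℤ) : χ k * χB l = -(χB l * χ k) := acom_base (NSFRel.mixedCC k l)
lemma Pce (k l : ℤ) : χ k * ηB l = -(ηB l * χ k) := acom_base (NSFRel.mixedCE k l)
lemma Pec (k l : ℤ) : η k * χB l = -(χB l * η k) := acom_base (NSFRel.mixedEC k l)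
lemma Pee (k l : ℤ) : η k * ηB l = -(ηB l * η k) := acom_base (NSFRel.mixedEE k l)
lemma PccR (k l : ℤ) : χB l * χ k = -(χ k * χB l) := swap_of _ _ (Pcc k l)
lemma PceR (k l : ℤ) : ηB l * χ k = -(χ k * ηB l) := swap_of _ _ (Pce k l)
lemma PecR (k l : ℤ) : χB l * η k = -(η k * χB l) := swap_of _ _ (Pec k l)
lemma PeeR (k l : ℤ) : ηB l * η k = -(η k * ηB l) := swap_of _ _ (Pee k l)

lemma Aee (k l : ℤ) : η k * η l = -(η l * η k) := acom_base (NSFRel.etaEta k l)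
lemma Acc2 (k l : ℤ) : χ k * χ l = -(χ l * χ k) := acom_base (NSFRel.chiChi k l)
lemma AeeB (k l : ℤ) : ηB k * ηB l = -(ηB l * ηB k) := acom_base (NSFRel.etaEtaB k l)
lemma Acc2B (k l : ℤ) : χB k * χB l = -(χB l * χB k) := acom_base (NSFRel.chiChiB k l)
lemma Aec (k l : ℤ) (h : k + l ≠ 0) : η k * χ l = -(χ l * η k) :=
  acom_delta h (NSFRel.etaChi k l)
lemma Ace (k l : ℤ) (h : k + l ≠ 0) : χ k * η l = -(η l * χ k) :=
  swap_of _ _ (Aec l k (by omega))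
lemma AecB (k l : ℤ) (h : k + l ≠ 0) : ηB k * χB l = -(χB l * ηB k) :=
  acom_delta h (NSFRel.etaChiB k l)
lemma AceB (k l : ℤ) (h : k + l ≠ 0) : χB k * ηB l = -(ηB l * χB k) :=
  swap_of _ _ (AecB l k (by omega))

/-- Moving a high-index annihilation mode across an arbitrary element of NSF. -/
lemma move (a : NSF) : ∃ N : ℤ, ∀ k, N ≤ k →
    η k * a = σa a * η k ∧ χ k * a = σa a * χ k ∧
    ηB k * a = σa a * ηB k ∧ χB k * a = σa a * χB k := by
  obtain ⟨x, rfl⟩ := RingQuot.mkAlgHom_surjective ℂ NSFRel a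
  induction x using FreeAlgebra.induction with
  | grade0 r =>
      refine ⟨0, fun k _ => ?_⟩
      rw [show (RingQuot.mkAlgHom ℂ NSFRel) (algebraMap ℂ NSFFree r) = algebraMap ℂ NSF r
        from AlgHom.commutes _ r]
      rw [AlgHom.commutes]
      exact ⟨(Algebra.commutes r (η k)).symm, (Algebra.commutes r (χ k)).symm,
        (Algebra.commutes r (ηB k)).symm, (Algebra.commutes r (χB k)).symm⟩
  | grade1 g =>
      cases g with
      | eta l =>
          refine ⟨|l| + 1, fun k hk => ?_⟩
          have h1 : k + l ≠ 0 := by have := neg_abs_le l; omega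
          have : (RingQuot.mkAlgHom ℂ NSFRel) (FreeAlgebra.ι ℂ (NSFGen.eta l)) = η l := rfl
          rw [this, σa_η]
          have tst : ∀ a b : NSF, -a * b = -(a * b) := fun a b => neg_mul a b
          rw [tst, tst, tst, tst]
          exact ⟨Aee k l, Ace k l h1, PeeR l k, PecR l k⟩
      | chi l =>
          refine ⟨|l| + 1, fun k hk => ?_⟩
          have h1 : k + l ≠ 0 := by have := neg_abs_le l; omega
          have : (RingQuot.mkAlgHom ℂ NSFRel) (FreeAlgebra.ι ℂ (NSFGen.chi l)) = χ l := rfl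
          rw [this, σa_χ]
          have tst : ∀ a b : NSF, -a * b = -(a * b) := fun a b => neg_mul a b
          rw [tst, tst, tst, tst]
          exact ⟨Aec k l h1, Acc2 k l, PceR l k, PccR l k⟩
      | etaB l =>
          refine ⟨|l| + 1, fun k hk => ?_⟩
          have h1 : k + l ≠ 0 := by have := neg_abs_le l; omega
          have : (RingQuot.mkAlgHom ℂ NSFRel) (FreeAlgebra.ι ℂ (NSFGen.etaB l)) = ηB l := rfl
          rw [this, σa_ηB]
          have tst : ∀ a b : NSF, -a * b = -(a * b) := fun a b => neg_mul a b
          rw [tst, tst, tst, tst]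
          exact ⟨Pee k l, Pce k l, AeeB k l, AceB k l h1⟩
      | chiB l =>
          refine ⟨|l| + 1, fun k hk => ?_⟩
          have h1 : k + l ≠ 0 := by have := neg_abs_le l; omega
          have : (RingQuot.mkAlgHom ℂ NSFRel) (FreeAlgebra.ι ℂ (NSFGen.chiB l)) = χB l := rfl
          rw [this, σa_χB]
          have tst : ∀ a b : NSF, -a * b = -(a * b) := fun a b => neg_mul a b
          rw [tst, tst, tst, tst]
          exact ⟨Pec k l, Pcc k l, AecB k l h1, Acc2B k l⟩
  | mul x y hx hy =>
      obtain ⟨Nx, hNx⟩ := hx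
      obtain ⟨Ny, hNy⟩ := hy
      refine ⟨max Nx Ny, fun k hk => ?_⟩
      obtain ⟨hx1, hx2, hx3, hx4⟩ := hNx k (le_trans (le_max_left _ _) hk)
      obtain ⟨hy1, hy2, hy3, hy4⟩ := hNy k (le_trans (le_max_right _ _) hk)
      rw [map_mul, map_mul]
      set A := (RingQuot.mkAlgHom ℂ NSFRel) x
      set B := (RingQuot.mkAlgHom ℂ NSFRel) y
      refine ⟨?_, ?_, ?_, ?_⟩ <;>
        · rw [← mul_assoc]
          first
            | rw [hx1, mul_assoc, hy1] | rw [hx2, mul_assoc, hy2]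
            | rw [hx3, mul_assoc, hy3] | rw [hx4, mul_assoc, hy4]
          rw [← mul_assoc]
  | add x y hx hy =>
      obtain ⟨Nx, hNx⟩ := hx
      obtain ⟨Ny, hNy⟩ := hy
      refine ⟨max Nx Ny, fun k hk => ?_⟩
      obtain ⟨hx1, hx2, hx3, hx4⟩ := hNx k (le_trans (le_max_left _ _) hk)
      obtain ⟨hy1, hy2, hy3, hy4⟩ := hNy k (le_trans (le_max_right _ _) hk)
      rw [map_add, map_add]
      exact ⟨by rw [mul_add, add_mul, hx1, hy1], by rw [mul_add, add_mul, hx2, hy2],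
        by rw [mul_add, add_mul, hx3, hy3], by rw [mul_add, add_mul, hx4, hy4]⟩

lemma negmul (a b : NSF) : -a * b = -(a * b) := neg_mul a b

lemma eta_mem {k : ℤ} (hk : 0 < k) : η k ∈ nposIdeal :=
  Submodule.subset_span (by left; left; left; left; exact ⟨k, hk, rfl⟩)
lemma chi_mem {k : ℤ} (hk : 0 < k) : χ k ∈ nposIdeal :=
  Submodule.subset_span (by left; left; left; right; exact ⟨k, hk, rfl⟩)
lemma etaB_mem {k : ℤ} (hk : 0 < k) : ηB k ∈ nposIdeal :=
  Submodule.subset_span (by left; left; right; exact ⟨k, hk, rfl⟩)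
lemma chiB_mem {k : ℤ} (hk : 0 < k) : χB k ∈ nposIdeal :=
  Submodule.subset_span (by left; right; exact ⟨k, hk, rfl⟩)

lemma mul_mem' (b : NSF) {x : NSF} (hx : x ∈ nposIdeal) : b * x ∈ nposIdeal := by
  simpa [smul_eq_mul] using nposIdeal.smul_mem b hx

/-- Annihilation: far-out Sugawara summands kill any vector. -/
lemma ann (n : ℤ) (v : NFock) :
    ∃ M : ℤ, ∀ k : ℤ, k ∉ Finset.Icc (-M) M → sfterm n k • v = 0 ∧ sftermB n k • v = 0 := by
  obtain ⟨a, rfl⟩ := Submodule.Quotient.mk_surjective nposIdeal v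
  obtain ⟨N, hN⟩ := move a
  obtain ⟨P, hPN, hP1⟩ : ∃ P : ℤ, N ≤ P ∧ 1 ≤ P := ⟨max N 1, le_max_left _ _, le_max_right _ _⟩
  have habs0 := abs_nonneg n
  have habs1 := neg_abs_le n
  have habs2 := le_abs_self n
  refine ⟨|n| + P + 1, fun k hk => ?_⟩
  rw [Finset.mem_Icc, not_and_or] at hk
  have hmem : sfterm n k * a ∈ nposIdeal ∧ sftermB n k * a ∈ nposIdeal := by
    rcases hk with hk | hk
    · -- k very negative: 2k < n, use the χ (n - k) factor
      push_neg at hk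
      have h2 : ¬ n ≤ 2 * k := by
        have u1 := abs_nonneg n; have u2 := neg_abs_le n; omega
      have hnk : P ≤ n - k := by
        have u2 := neg_abs_le n; omega
      have hc := (hN (n - k) (le_trans hPN hnk)).2.1
      have hcB := (hN (n - k) (le_trans hPN hnk)).2.2.2
      have hpos : (0:ℤ) < n - k := lt_of_lt_of_le (by omega) hnk
      constructor
      · rw [sfterm, if_neg h2, negmul, mul_assoc, hc, ← mul_assoc]
        exact (nposIdeal.neg_mem (mul_mem' _ (chi_mem hpos)))
      · rw [sftermB, if_neg h2, negmul, mul_assoc, hcB, ← mul_assoc]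
        exact (nposIdeal.neg_mem (mul_mem' _ (chiB_mem hpos)))
    · -- k very positive: n ≤ 2k, use the η k factor
      push_neg at hk
      have h2 : n ≤ 2 * k := by
        have u1 := abs_nonneg n; have u2 := neg_abs_le n; have u3 := le_abs_self n; omega
      have hkN : P ≤ k := by omega
      have he := (hN k (le_trans hPN hkN)).1
      have heB := (hN k (le_trans hPN hkN)).2.2.1
      have hpos : (0:ℤ) < k := lt_of_lt_of_le (by omega) hkN
      constructor
      · rw [sfterm, if_pos h2, mul_assoc, he, ← mul_assoc]
        exact mul_mem' _ (eta_mem hpos)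
      · rw [sftermB, if_pos h2, mul_assoc, heB, ← mul_assoc]
        exact mul_mem' _ (etaB_mem hpos)
  constructor
  · rw [← Submodule.Quotient.mk_smul, smul_eq_mul, Submodule.Quotient.mk_eq_zero]
    exact hmem.1
  · rw [← Submodule.Quotient.mk_smul, smul_eq_mul, Submodule.Quotient.mk_eq_zero]
    exact hmem.2


lemma core {a b c d : NSF}
    (hac : a * c = -(c * a)) (had : a * d = -(d * a))
    (hbc : b * c = -(c * b)) (hbd : b * d = -(d * b)) :
    (a * b) * (c * d) = (c * d) * (a * b) := by
  have negmul' : ∀ x y : NSF, -x * y = -(x * y) := fun x y => neg_mul x y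
  have mulneg' : ∀ x y : NSF, x * -y = -(x * y) := fun x y => mul_neg x y
  have hbcd : b * (c * d) = c * (d * b) := by
    rw [← mul_assoc, hbc, negmul', mul_assoc, hbd, mulneg', neg_neg]
  have hadb : a * (d * b) = -(d * (a * b)) := by
    rw [← mul_assoc, had, negmul', mul_assoc]
  calc (a * b) * (c * d) = a * (b * (c * d)) := mul_assoc _ _ _
    _ = a * (c * (d * b)) := by rw [hbcd]
    _ = (a * c) * (d * b) := (mul_assoc _ _ _).symm
    _ = -(c * a * (d * b)) := by rw [hac, negmul']
    _ = -(c * (a * (d * b))) := by rw [mul_assoc]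
    _ = c * (d * (a * b)) := by rw [hadb, mulneg', neg_neg]
    _ = (c * d) * (a * b) := (mul_assoc _ _ _).symm

lemma sfterm_comm (n k m l : ℤ) :
    sfterm n k * sftermB m l = sftermB m l * sfterm n k := by
  have negmul' : ∀ x y : NSF, -x * y = -(x * y) := fun x y => neg_mul x y
  have mulneg' : ∀ x y : NSF, x * -y = -(x * y) := fun x y => mul_neg x y
  unfold sfterm sftermB
  split_ifs with h1 h2 h2
  · exact core (Pcc _ _) (Pce _ _) (Pec _ _) (Pee _ _)
  · rw [mulneg', negmul', core (Pce _ _) (Pcc _ _) (Pee _ _) (Pec _ _)]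
  · rw [negmul', mulneg', core (Pec _ _) (Pee _ _) (Pcc _ _) (Pce _ _)]
  · rw [negmul', negmul', mulneg', mulneg', core (Pee _ _) (Pec _ _) (Pce _ _) (Pcc _ _)]


/-- the holomorphic and antiholomorphic Sugawara Virasoro modes
commute on the non-chiral logarithmic Fock space. -/
theorem holo_antiholo_commute (n m : ℤ) (v : NFock) :
    L n (Lb m v) = Lb m (L n v) := by
  obtain ⟨M1, h1⟩ := ann n v
  obtain ⟨M2, h2⟩ := ann m v
  obtain ⟨M3, h3⟩ := ann n (Lb m v)
  obtain ⟨M4, h4⟩ := ann m (L n v)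
  set M := max (max M1 M2) (max M3 M4) with hM
  set s : Finset ℤ := Finset.Icc (-M) M with hs
  have hsub : ∀ M' : ℤ, M' ≤ M → ∀ k : ℤ, k ∉ s → k ∉ Finset.Icc (-M') M' := by
    intro M' hM' k hk
    simp only [hs, Finset.mem_Icc] at hk ⊢
    omega
  have e1 : L n (Lb m v) = ∑ k ∈ s, sfterm n k • Lb m v := by
    refine finsum_eq_sum_of_support_subset _ fun k hk => ?_
    by_contra hks
    exact hk ((h3 k (hsub M3 (le_trans (le_max_left _ _) (le_max_right _ _)) k hks)).1)
  have e2 : Lb m v = ∑ l ∈ s, sftermB m l • v := by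
    refine finsum_eq_sum_of_support_subset _ fun l hl => ?_
    by_contra hls
    exact hl ((h2 l (hsub M2 (le_trans (le_max_right _ _) (le_max_left _ _)) l hls)).2)
  have e3 : L n v = ∑ k ∈ s, sfterm n k • v := by
    refine finsum_eq_sum_of_support_subset _ fun k hk => ?_
    by_contra hks
    exact hk ((h1 k (hsub M1 (le_trans (le_max_left _ _) (le_max_left _ _)) k hks)).1)
  have e4 : Lb m (L n v) = ∑ l ∈ s, sftermB m l • L n v := by
    refine finsum_eq_sum_of_support_subset _ fun l hl => ?_
    by_contra hls
    exact hl ((h4 l (hsub M4 (le_trans (le_max_right _ _) (le_max_right _ _)) l hls)).2)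
  calc L n (Lb m v) = ∑ k ∈ s, sfterm n k • Lb m v := e1
    _ = ∑ k ∈ s, ∑ l ∈ s, sftermB m l • (sfterm n k • v) := by
        refine Finset.sum_congr rfl fun k _ => ?_
        rw [e2, Finset.smul_sum]
        refine Finset.sum_congr rfl fun l _ => ?_
        rw [smul_smul, smul_smul, sfterm_comm]
    _ = ∑ l ∈ s, ∑ k ∈ s, sftermB m l • (sfterm n k • v) := Finset.sum_comm
    _ = ∑ l ∈ s, sftermB m l • L n v := by
        refine Finset.sum_congr rfl fun l _ => ?_
        rw [e3, Finset.smul_sum]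
    _ = Lb m (L n v) := e4.symm
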